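/- The 3-dimensional simple Lie algebra sl₂ over an algebraically closed field of characteristic 0 admits a nontrivial (−1)-derivation, i.e. a nonzero linear map φ with φ([x,y]) = −(φ(x)·y + x·φ(y)) (product denoting the Lie bracket) that is not a linear combination of elements of the centroid. -/

import Mathlib

open LieAlgebra.SpecialLinear in
/-- sl₂ over an algebraically closed field of characteristic 0 admits a
nontrivial (−1)-derivation: a nonzero linear map φ with φ[x,y] = −([φx,y] + [x,φy])
which is not a scalar multiple of the identity. -/
theorem sl2_has_nontrivial_minus_one_derivation (K : Type*) [Field K] [IsAlgClosed K]
    [CharZero K] :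
    ∃ φ : ↥(sl (Fin 2) K) →ₗ[K] ↥(sl (Fin 2) K),
      φ ≠ 0 ∧
      (∀ x y : ↥(sl (Fin 2) K), φ ⁅x, y⁆ = -(⁅φ x, y⁆ + ⁅x, φ y⁆)) ∧
      (∀ c : K, φ ≠ c • LinearMap.id) := by
  have hne : (0 : Fin 2) ≠ 1 := by decide
  let f : ↥(sl (Fin 2) K) →ₗ[K] K :=
    { toFun := fun x => x.val 0 1, map_add' := fun x y => rfl, map_smul' := fun c x => rfl }
  refine ⟨f.smulRight (single 1 0 hne.symm (1 : K)), ?_, ?_, ?_⟩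
  · intro h
    have h2 := congrFun (congrArg (fun f => (DFunLike.coe f)) h) (single (0 : Fin 2) 1 (by decide) (1 : K))
    simp only [LinearMap.smulRight_apply, LinearMap.coe_mk, AddHom.coe_mk, val_single, LinearMap.zero_apply] at h2
    have := congrArg (fun z => z.val 1 0) h2
    simp [f, SetLike.val_smul, Matrix.smul_apply, Matrix.single, Subtype.ext_iff, val_single] at this
    have e0 : (Matrix.single (0 : Fin 2) 1 (1 : K)) 0 1 = 0 := this; rw [Matrix.single_apply_same] at e0; exact one_ne_zero e0
  · intro x y
    have hx0 : Matrix.traceLinearMap (Fin 2) K K x.val = 0 := x.2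
    have hy0 : Matrix.traceLinearMap (Fin 2) K K y.val = 0 := y.2
    simp only [Matrix.traceLinearMap_apply, Matrix.trace, Fin.sum_univ_two,
      Matrix.diag_apply] at hx0 hy0
    have hx : x.val 1 1 = - x.val 0 0 := eq_neg_of_add_eq_zero_right hx0
    have hy : y.val 1 1 = - y.val 0 0 := eq_neg_of_add_eq_zero_right hy0
    have hco : ∀ (a : K), ((a • single 1 0 hne.symm (1 : K) : ↥(sl (Fin 2) K)).val)
        = a • (Matrix.single 1 0 (1 : K)) := fun a => rfl
    apply Subtype.ext
    show (⁅x,y⁆.val 0 1) • (single 1 0 hne.symm (1 : K)).val =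
      -((x.val 0 1 • single 1 0 hne.symm (1 : K) : ↥(sl (Fin 2) K)).val * y.val
        - y.val * (x.val 0 1 • single 1 0 hne.symm (1 : K) : ↥(sl (Fin 2) K)).val
      + (x.val * (y.val 0 1 • single 1 0 hne.symm (1 : K) : ↥(sl (Fin 2) K)).val
        - (y.val 0 1 • single 1 0 hne.symm (1 : K) : ↥(sl (Fin 2) K)).val * x.val))
    funext i j
    fin_cases i <;> fin_cases j <;>
      simp [sl_bracket, Ring.lie_def, Matrix.mul_apply, Fin.sum_univ_two,
        hco, Matrix.smul_apply, Matrix.single, hx, hy] <;> ring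
  · intro c h
    have h1 := congrFun (congrArg (fun f => (DFunLike.coe f)) h) (single 1 0 hne.symm (1 : K))
    have h2 := congrFun (congrArg (fun f => (DFunLike.coe f)) h) (single (0 : Fin 2) 1 (by decide) (1 : K))
    simp only [LinearMap.smulRight_apply, LinearMap.coe_mk, AddHom.coe_mk, val_single, LinearMap.smul_apply,
      LinearMap.id_apply, Subtype.ext_iff] at h1 h2
    have e1 := congrArg (fun z => z 1 0) h1
    have e2 := congrArg (fun z => z 1 0) h2
    simp [f, SetLike.val_smul, Matrix.smul_apply, Matrix.single] at e1 e2
    have hco : ∀ (a : K), ((a • single 0 1 (show (0:Fin 2) ≠ 1 by decide) (1 : K) : ↥(sl (Fin 2) K)).val)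
        = a • (Matrix.single 0 1 (1 : K)) := fun a => rfl
    have e0 : (Matrix.single (0 : Fin 2) 1 (1 : K)) 0 1 = 0 := e2; rw [Matrix.single_apply_same] at e0; exact one_ne_zero e0
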